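/- Let 𝓜 be a finite set of even cardinality M = 2n, ψ : 𝓜 → 𝓜 an involution, and k an odd positive integer. Then the sum over all x ∈ X_ψ of m_k(x) equals |𝓜 \ Fix(ψ)| · C(n, k) · 2^k · (M−2)^(n−k), where C(n,k) is the binomial coefficient. Equivalently, the average A(k,M) = (1/|X_ψ|) Σ_{x ∈ X_ψ} m_k(x)/M equals |𝓜 \ Fix(ψ)| · C(M/2, k) · 2^k · (M−2)^(M/2−k) / M^(M/2+1). -/

import Mathlib

open Finset

/-- The set of ψ-symmetric vectors of length `M`: vectors `x` with
`x (M+1-j) = ψ (x j)` for all `j` (0-indexed: `x j.rev = ψ (x j)`). -/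
def Xpsi (α : Type*) [Fintype α] [DecidableEq α] (M : ℕ) (ψ : α → α) :
    Finset (Fin M → α) :=
  Finset.univ.filter fun x => ∀ j : Fin M, x j.rev = ψ (x j)

/-- The number of occurrences of `y` among the components of `x`. -/
def occCount {α : Type*} {M : ℕ} [DecidableEq α] (x : Fin M → α) (y : α) : ℕ :=
  (Finset.univ.filter fun j => x j = y).card

/-- `mCount x k` is the number of elements occurring exactly `k` times among
the components of `x`. -/
def mCount {α : Type*} {M : ℕ} [Fintype α] [DecidableEq α] (x : Fin M → α) (k : ℕ) : ℕ :=
  (Finset.univ.filter fun y => occCount x y = k).card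

/-- The set of fixed points of `ψ`. -/
def fixPts (α : Type*) [Fintype α] [DecidableEq α] (ψ : α → α) : Finset α :=
  Finset.univ.filter fun y => ψ y = y

section Aux

variable {α : Type*} [Fintype α] [DecidableEq α]

def Phi {n : ℕ} (ψ : α → α) (z : Fin n → α) : Fin (2 * n) → α :=
  fun j => if h : (j : ℕ) < n then z ⟨j, h⟩
    else ψ (z ⟨2 * n - 1 - j, by have := j.isLt; omega⟩)

lemma Phi_mem {n : ℕ} (ψ : α → α) (hψ : ∀ y, ψ (ψ y) = y) (z : Fin n → α) :
    Phi ψ z ∈ Xpsi α (2 * n) ψ := by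
  simp only [Xpsi, mem_filter, mem_univ, true_and]
  intro j
  have hj := j.isLt
  have hrev : ((j.rev : Fin (2 * n)) : ℕ) = 2 * n - 1 - j := by
    rw [Fin.val_rev]; omega
  unfold Phi
  by_cases h : (j : ℕ) < n
  · have h1 : ¬ ((j.rev : ℕ) < n) := by omega
    rw [dif_neg h1, dif_pos h]
    apply congrArg ψ
    apply congrArg z
    apply Fin.ext
    show 2 * n - 1 - ((j.rev : Fin (2*n)) : ℕ) = (j : ℕ)
    omega
  · have h1 : ((j.rev : ℕ)) < n := by omega
    rw [dif_pos h1, dif_neg h, hψ]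
    apply congrArg z
    apply Fin.ext
    show ((j.rev : Fin (2*n)) : ℕ) = 2 * n - 1 - (j : ℕ)
    omega

lemma Phi_res {n : ℕ} (ψ : α → α) (hψ : ∀ y, ψ (ψ y) = y) (x : Fin (2 * n) → α)
    (hx : x ∈ Xpsi α (2 * n) ψ) :
    Phi ψ (fun i : Fin n => x (Fin.castLE (by omega) i)) = x := by
  simp only [Xpsi, mem_filter, mem_univ, true_and] at hx
  funext j
  have hj := j.isLt
  unfold Phi
  by_cases h : (j : ℕ) < n
  · rw [dif_pos h]
    exact congrArg x (Fin.ext (by simp))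
  · rw [dif_neg h]
    beta_reduce
    have hrev : (Fin.castLE (show n ≤ 2 * n by omega)
        (⟨2 * n - 1 - j, by omega⟩ : Fin n)) = j.rev := by
      apply Fin.ext
      simp only [Fin.coe_castLE, Fin.val_rev]
      omega
    rw [hrev]
    have := hx j.rev
    rw [Fin.rev_rev] at this
    rw [← this]

lemma res_Phi {n : ℕ} (ψ : α → α) (z : Fin n → α) :
    (fun i : Fin n => Phi ψ z (Fin.castLE (by omega) i)) = z := by
  funext i
  unfold Phi
  rw [dif_pos (by simpa using i.isLt)]
  exact congrArg z (Fin.ext (by simp))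

def halfEquiv (n : ℕ) : Fin n ⊕ Fin n ≃ Fin (2 * n) :=
  finSumFinEquiv.trans (finCongr (two_mul n).symm)

lemma halfEquiv_inl (n : ℕ) (i : Fin n) : ((halfEquiv n (Sum.inl i)) : ℕ) = i := by
  simp [halfEquiv]

lemma halfEquiv_inr (n : ℕ) (i : Fin n) : ((halfEquiv n (Sum.inr i)) : ℕ) = n + i := by
  simp [halfEquiv]; omega

lemma occ_Phi {n : ℕ} (ψ : α → α) (hψ : ∀ y, ψ (ψ y) = y) (z : Fin n → α) (y : α) :
    occCount (Phi ψ z) y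
      = (univ.filter fun i => z i = y).card + (univ.filter fun i => z i = ψ y).card := by
  rw [occCount, card_filter, ← Equiv.sum_comp (halfEquiv n), Fintype.sum_sum_type]
  have h1 : ∀ i : Fin n, Phi ψ z (halfEquiv n (Sum.inl i)) = z i := by
    intro i
    unfold Phi
    rw [dif_pos (show ((halfEquiv n (Sum.inl i)) : ℕ) < n by rw [halfEquiv_inl]; exact i.isLt)]
    apply congrArg z
    apply Fin.ext
    show ((halfEquiv n (Sum.inl i)) : ℕ) = (i : ℕ)
    rw [halfEquiv_inl]
  have h2 : ∀ i : Fin n, Phi ψ z (halfEquiv n (Sum.inr i)) = ψ (z i.rev) := by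
    intro i
    have hi := i.isLt
    unfold Phi
    rw [dif_neg (show ¬ ((halfEquiv n (Sum.inr i)) : ℕ) < n by rw [halfEquiv_inr]; omega)]
    apply congrArg ψ
    apply congrArg z
    apply Fin.ext
    show 2 * n - 1 - ((halfEquiv n (Sum.inr i)) : ℕ) = ((i.rev : Fin n) : ℕ)
    rw [halfEquiv_inr, Fin.val_rev]
    omega
  have h3 : ∀ i : Fin n, (if ψ (z i.rev) = y then 1 else 0)
      = (if z i.rev = ψ y then 1 else 0) := by
    intro i
    congr 1
    simp only [eq_iff_iff]
    constructor
    · intro h; rw [← h, hψ]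
    · intro h; rw [h, hψ]
  simp only [h1, h2, h3]
  congr 1
  · rw [card_filter]
  · rw [card_filter]
    exact Equiv.sum_comp Fin.revPerm (fun i => if z i = ψ y then 1 else 0)

lemma count_exact (n k : ℕ) (S : Finset α) :
    (univ.filter fun z : Fin n → α => (univ.filter fun i => z i ∈ S).card = k).card
      = n.choose k * S.card ^ k * (Fintype.card α - S.card) ^ (n - k) := by
  rw [Finset.card_eq_sum_card_fiberwise
    (f := fun z : Fin n → α => univ.filter fun i => z i ∈ S)
    (t := powersetCard k univ)
    (fun z hz => by
      rw [Finset.mem_coe, mem_powersetCard]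
      exact ⟨subset_univ _, (mem_filter.mp (Finset.mem_coe.mp hz)).2⟩)]
  have key : ∀ T ∈ powersetCard k (univ : Finset (Fin n)),
      ((univ.filter fun z : Fin n → α =>
          (univ.filter fun i => z i ∈ S).card = k).filter
        (fun z => univ.filter (fun i => z i ∈ S) = T)).card
      = S.card ^ k * (Fintype.card α - S.card) ^ (n - k) := by
    intro T hT
    obtain ⟨-, hTc⟩ := mem_powersetCard.mp hT
    have hset : ((univ.filter fun z : Fin n → α =>
          (univ.filter fun i => z i ∈ S).card = k).filter
        (fun z => univ.filter (fun i => z i ∈ S) = T))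
        = Fintype.piFinset (fun i => if i ∈ T then S else Sᶜ) := by
      ext z
      simp only [mem_filter, mem_univ, true_and, Fintype.mem_piFinset]
      have hpt : ∀ i : Fin n, (z i ∈ (if i ∈ T then S else Sᶜ)) ↔ (z i ∈ S ↔ i ∈ T) := by
        intro i
        by_cases hi : i ∈ T <;> simp [hi]
      constructor
      · rintro ⟨-, hfT⟩ i
        rw [hpt]
        rw [Finset.ext_iff] at hfT
        have := hfT i
        simpa using this
      · intro h
        have hfT : univ.filter (fun i => z i ∈ S) = T := by
          ext i
          simp only [mem_filter, mem_univ, true_and]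
          exact (hpt i).mp (h i)
        exact ⟨by rw [hfT, hTc], hfT⟩
    rw [hset, Fintype.card_piFinset]
    have hc : ∀ i : Fin n, ((if i ∈ T then S else Sᶜ)).card
        = if i ∈ T then S.card else Fintype.card α - S.card := by
      intro i; by_cases hi : i ∈ T <;> simp [hi, card_compl]
    rw [Finset.prod_congr rfl (fun i _ => hc i)]
    rw [← Finset.prod_filter_mul_prod_filter_not univ (· ∈ T)]
    have e1 : univ.filter (· ∈ T) = T := by ext i; simp
    have e2 : univ.filter (fun i => i ∉ T) = Tᶜ := by ext i; simp
    rw [e1, e2]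
    rw [Finset.prod_congr rfl (fun i hi => if_pos hi),
      Finset.prod_congr rfl (fun i hi => if_neg (mem_compl.mp hi))]
    rw [prod_const, prod_const, hTc, card_compl, Fintype.card_fin, hTc]
  rw [Finset.sum_congr rfl key, sum_const, card_powersetCard, card_univ, Fintype.card_fin,
    smul_eq_mul]
  ring

end Aux

section Aux2

variable {α : Type*} [Fintype α] [DecidableEq α]

lemma count_y_nonfix {n : ℕ} (k : ℕ) (ψ : α → α) (hψ : ∀ y, ψ (ψ y) = y) (y : α)
    (hy : ¬ ψ y = y) :
    (univ.filter fun z : Fin n → α => occCount (Phi ψ z) y = k).card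
      = n.choose k * 2 ^ k * (Fintype.card α - 2) ^ (n - k) := by
  have hSy : ({y, ψ y} : Finset α).card = 2 := by
    rw [card_insert_of_notMem (by simp; exact fun h => hy h.symm), card_singleton]
  have hocc : ∀ z : Fin n → α,
      occCount (Phi ψ z) y = (univ.filter fun i => z i ∈ ({y, ψ y} : Finset α)).card := by
    intro z
    have hun : (univ.filter fun i => z i ∈ ({y, ψ y} : Finset α))
        = (univ.filter fun i => z i = y) ∪ (univ.filter fun i => z i = ψ y) := by
      ext i; simp [mem_insert, mem_singleton]
    have hdis : Disjoint (univ.filter fun i : Fin n => z i = y)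
        (univ.filter fun i => z i = ψ y) := by
      rw [Finset.disjoint_left]
      intro i hi1 hi2
      simp only [mem_filter, mem_univ, true_and] at hi1 hi2
      exact hy (by rw [← hi2, hi1])
    rw [occ_Phi ψ hψ, hun, card_union_of_disjoint hdis]
  simp only [hocc]
  rw [count_exact n k ({y, ψ y} : Finset α), hSy]

lemma count_y_fix {n : ℕ} (k : ℕ) (ψ : α → α) (hψ : ∀ y, ψ (ψ y) = y) (y : α)
    (hy : ψ y = y) (hk : Odd k) :
    (univ.filter fun z : Fin n → α => occCount (Phi ψ z) y = k).card = 0 := by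
  rw [card_eq_zero, filter_eq_empty_iff]
  intro z _
  rw [occ_Phi ψ hψ, hy]
  obtain ⟨m, hm⟩ := hk
  omega

end Aux2

theorem stmt_4 {α : Type*} [Fintype α] [DecidableEq α] (n : ℕ) (hn : 1 ≤ n)
    (hcard : Fintype.card α = 2 * n) (ψ : α → α) (hψ : ∀ y, ψ (ψ y) = y)
    (k : ℕ) (hk : Odd k) :
    (∑ x ∈ Xpsi α (2 * n) ψ, mCount x k
        = (Fintype.card α - (fixPts α ψ).card) * n.choose k * 2 ^ k
            * (2 * n - 2) ^ (n - k)) ∧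
      ((2 * (n : ℝ)) ^ n)⁻¹ *
          ∑ x ∈ Xpsi α (2 * n) ψ, (mCount x k : ℝ) / (2 * (n : ℝ))
        = ((Fintype.card α : ℝ) - (fixPts α ψ).card) * n.choose k * 2 ^ k
            * (2 * (n : ℝ) - 2) ^ (n - k) / (2 * (n : ℝ)) ^ (n + 1) := by
  have hfixle : (fixPts α ψ).card ≤ Fintype.card α := by
    rw [fixPts, ← card_univ]
    exact card_filter_le _ _
  have hstep1 : ∑ x ∈ Xpsi α (2 * n) ψ, mCount x k
      = ∑ z : Fin n → α, mCount (Phi ψ z) k :=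
    Finset.sum_bij' (fun x _ => fun i : Fin n => x (Fin.castLE (by omega) i))
      (fun z _ => Phi ψ z)
      (fun x hx => mem_univ _)
      (fun z _ => Phi_mem ψ hψ z)
      (fun x hx => Phi_res ψ hψ x hx)
      (fun z _ => res_Phi ψ z)
      (fun x hx => by rw [Phi_res ψ hψ x hx])
  have hstep2 : ∑ z : Fin n → α, mCount (Phi ψ z) k
      = ∑ y : α, (univ.filter fun z : Fin n → α => occCount (Phi ψ z) y = k).card := by
    simp only [mCount, card_filter]
    rw [Finset.sum_comm]
  have hstep3 : ∑ y : α, (univ.filter fun z : Fin n → α => occCount (Phi ψ z) y = k).card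
      = (Fintype.card α - (fixPts α ψ).card)
          * (n.choose k * 2 ^ k * (Fintype.card α - 2) ^ (n - k)) := by
    have hpt : ∀ y ∈ (univ : Finset α),
        (univ.filter fun z : Fin n → α => occCount (Phi ψ z) y = k).card
          = if ψ y = y then 0 else n.choose k * 2 ^ k * (Fintype.card α - 2) ^ (n - k) := by
      intro y _
      by_cases hy : ψ y = y
      · rw [if_pos hy]; exact count_y_fix k ψ hψ y hy hk
      · rw [if_neg hy]; exact count_y_nonfix k ψ hψ y hy
    rw [Finset.sum_congr rfl hpt, Finset.sum_ite, Finset.sum_const, Finset.sum_const,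
      smul_eq_mul, smul_eq_mul, mul_zero, zero_add]
    have hcards := card_filter_add_card_filter_not
      (s := (univ : Finset α)) (fun y => ψ y = y)
    rw [card_univ] at hcards
    have : (univ.filter fun y : α => ¬ ψ y = y).card
        = Fintype.card α - (fixPts α ψ).card := by
      rw [fixPts] at hfixle ⊢
      omega
    rw [this, mul_comm]
  have part1 : ∑ x ∈ Xpsi α (2 * n) ψ, mCount x k
      = (Fintype.card α - (fixPts α ψ).card) * n.choose k * 2 ^ k * (2 * n - 2) ^ (n - k) := by
    rw [hstep1, hstep2, hstep3, hcard, ← mul_assoc, ← mul_assoc]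
  refine ⟨part1, ?_⟩
  have hsum : ∑ x ∈ Xpsi α (2 * n) ψ, (mCount x k : ℝ) / (2 * (n : ℝ))
      = ((∑ x ∈ Xpsi α (2 * n) ψ, mCount x k : ℕ) : ℝ) / (2 * (n : ℝ)) := by
    rw [← Finset.sum_div, Nat.cast_sum]
  rw [hsum, part1]
  have h2le : 2 ≤ 2 * n := by omega
  have hne : (2 : ℝ) * (n : ℝ) ≠ 0 := by
    have : (1 : ℝ) ≤ (n : ℝ) := by exact_mod_cast hn
    nlinarith
  push_cast [Nat.cast_sub hfixle, Nat.cast_sub h2le]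
  field_simp
  ring_nf
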